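/- Let H be a nontrivial abelian group, I a countably infinite set, and J a set of cardinality ℵ₁. Then there exists a coherent family ⟨φ_f : X(f) → H | f : I → [J]^{<ω}⟩ that is not trivial. -/

import Mathlib

open Cardinal Ordinal

lemma my_exists_cofseq (δ : Ordinal) (hl : Order.IsSuccLimit δ) (hc : δ.card ≤ ℵ₀) :
    ∃ s : ℕ → Ordinal, (∀ k, s k < δ) ∧ ∀ γ < δ, ∃ k, γ < s k := by
  have hne : (Set.Iio δ).Nonempty := ⟨0, hl.pos⟩
  have hct : (Set.Iio δ).Countable := by
    rw [← Set.countable_coe_iff, ← Cardinal.mk_le_aleph0_iff, Ordinal.mk_Iio_ordinal]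
    calc Cardinal.lift δ.card ≤ Cardinal.lift ℵ₀ := Cardinal.lift_le.mpr hc
    _ = ℵ₀ := Cardinal.lift_aleph0
  obtain ⟨g, hg⟩ := hct.exists_surjective hne
  refine ⟨fun k => (g k).1 + 1, fun k => by
      show (g k).1 + 1 < δ
      rw [Ordinal.add_one_eq_succ]; exact hl.succ_lt (g k).2,
    fun γ hγ => ?_⟩
  obtain ⟨k, hk⟩ := hg ⟨γ, hγ⟩
  refine ⟨k, ?_⟩
  show γ < (g k).1 + 1
  have h2 : (g k).1 = γ := by rw [hk]
  rw [h2, Ordinal.add_one_eq_succ]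
  exact Order.lt_succ γ

open scoped Classical in
noncomputable def cseq (δ : Ordinal) : ℕ → Ordinal :=
  if h : Order.IsSuccLimit δ ∧ δ.card ≤ ℵ₀ then (my_exists_cofseq δ h.1 h.2).choose else fun _ => 0

lemma cseq_lt {δ : Ordinal} (h1 : Order.IsSuccLimit δ) (h2 : δ.card ≤ ℵ₀) (k : ℕ) : cseq δ k < δ := by
  rw [cseq, dif_pos ⟨h1, h2⟩]
  exact (my_exists_cofseq δ h1 h2).choose_spec.1 k

lemma cseq_cof {δ : Ordinal} (h1 : Order.IsSuccLimit δ) (h2 : δ.card ≤ ℵ₀) {γ : Ordinal} (hγ : γ < δ) :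
    ∃ k, γ < cseq δ k := by
  rw [cseq, dif_pos ⟨h1, h2⟩]
  exact (my_exists_cofseq δ h1 h2).choose_spec.2 γ hγ

open scoped Classical in
noncomputable def E (δ : Ordinal) (γ : Ordinal) : ℕ :=
  if h : Order.IsSuccLimit δ ∧ δ.card ≤ ℵ₀ then
    if hγ : ∃ k, γ < cseq δ k then
      have hlt : cseq δ (Nat.find hγ) < δ := cseq_lt h.1 h.2 _
      max (Nat.find hγ) (E (cseq δ (Nat.find hγ)) γ)
    else 0
  else if h2 : ∃ b : Ordinal, δ = b + 1 then
    have hlt2 : h2.choose < δ := by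
      calc h2.choose < h2.choose + 1 := by
            rw [Ordinal.add_one_eq_succ]; exact Order.lt_succ _
        _ ≤ δ := le_of_eq h2.choose_spec.symm
    if γ < h2.choose then E h2.choose γ else 0
  else 0
termination_by δ
decreasing_by exacts [hlt, hlt2]

lemma E_succ (b γ : Ordinal) : E (b+1) γ = if γ < b then E b γ else 0 := by
  have hnl : ¬ (Order.IsSuccLimit (b+1) ∧ (b+1).card ≤ ℵ₀) := by
    rintro ⟨h, -⟩
    rw [Ordinal.add_one_eq_succ] at h
    exact Order.not_isSuccLimit_succ b h
  have h2 : ∃ b' : Ordinal, b + 1 = b' + 1 := ⟨b, rfl⟩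
  have hch : h2.choose = b := by
    have hcs := h2.choose_spec
    generalize hx : h2.choose = c at hcs ⊢
    rw [Ordinal.add_one_eq_succ, Ordinal.add_one_eq_succ] at hcs
    exact (Order.succ_injective hcs).symm
  rw [E, dif_neg hnl, dif_pos h2]
  simp [hch]

open scoped Classical in
lemma E_limit {δ : Ordinal} (h1 : Order.IsSuccLimit δ) (h2 : δ.card ≤ ℵ₀) {γ : Ordinal} (hγ : γ < δ) :
    E δ γ = max (Nat.find (cseq_cof h1 h2 hγ))
      (E (cseq δ (Nat.find (cseq_cof h1 h2 hγ))) γ) := by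
  rw [E, dif_pos ⟨h1, h2⟩, dif_pos (cseq_cof h1 h2 hγ)]

lemma lt_add_one_iff' {γ b : Ordinal} : γ < b + 1 ↔ γ ≤ b := by
  rw [Ordinal.add_one_eq_succ, Order.lt_succ_iff]

lemma E_fto : ∀ δ : Ordinal, δ.card ≤ ℵ₀ → ∀ n : ℕ, {γ | γ < δ ∧ E δ γ ≤ n}.Finite := by
  intro δ
  induction δ using Ordinal.induction with
  | _ δ IH =>
  intro hc n
  rcases Ordinal.zero_or_succ_or_isSuccLimit δ with h0 | ⟨b, hb⟩ | hl
  · subst h0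
    convert Set.finite_empty
    ext γ; simp [not_lt_zero]
  · rw [← Ordinal.add_one_eq_succ] at hb; subst hb
    have hblt : b < b + 1 := lt_add_one_iff'.mpr le_rfl
    have hsub : {γ | γ < b+1 ∧ E (b+1) γ ≤ n} ⊆ insert b {γ | γ < b ∧ E b γ ≤ n} := by
      rintro γ ⟨hγ, hE⟩
      rcases lt_or_eq_of_le (lt_add_one_iff'.mp hγ) with h | h
      · rw [E_succ, if_pos h] at hE
        exact Set.mem_insert_of_mem _ ⟨h, hE⟩
      · exact h ▸ Set.mem_insert _ _
    exact Set.Finite.subset (Set.Finite.insert _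
      (IH b hblt (le_trans (Ordinal.card_le_card hblt.le) hc) n)) hsub
  · classical
    have hfin : ∀ k : ℕ, {γ | γ < cseq δ k ∧ E (cseq δ k) γ ≤ n}.Finite := fun k =>
      IH _ (cseq_lt hl hc k) (le_trans (Ordinal.card_le_card (cseq_lt hl hc k).le) hc) n
    refine Set.Finite.subset (Set.Finite.biUnion (Set.finite_Iic n)
      (fun k _ => hfin k)) ?_
    rintro γ ⟨hγ, hE⟩
    rw [E_limit hl hc hγ] at hE
    rw [max_le_iff] at hE
    refine Set.mem_biUnion (hE.1 : _ ≤ n) ⟨Nat.find_spec (cseq_cof hl hc hγ), hE.2⟩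

lemma E_coh : ∀ δ : Ordinal, δ.card ≤ ℵ₀ → ∀ β < δ, {γ | γ < β ∧ E β γ ≠ E δ γ}.Finite := by
  intro δ
  induction δ using Ordinal.induction with
  | _ δ IH =>
  intro hc β hβ
  rcases Ordinal.zero_or_succ_or_isSuccLimit δ with h0 | ⟨b, hb⟩ | hl
  · exact absurd (h0 ▸ hβ) ((not_lt_zero (a := β)))
  · rw [← Ordinal.add_one_eq_succ] at hb; subst hb
    have hcb : b.card ≤ ℵ₀ := le_trans (Ordinal.card_le_card (lt_add_one_iff'.mpr le_rfl).le) hc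
    rcases lt_or_eq_of_le (lt_add_one_iff'.mp hβ) with h | h
    · refine Set.Finite.subset (IH b (lt_add_one_iff'.mpr le_rfl) hcb β h) ?_
      rintro γ ⟨hγ, hne⟩
      refine ⟨hγ, fun heq => hne ?_⟩
      rw [heq, E_succ, if_pos (hγ.trans h)]
    · subst h
      convert Set.finite_empty
      ext γ
      simp only [Set.mem_setOf_eq, Set.mem_empty_iff_false, iff_false, not_and, ne_eq, not_not]
      intro hγ
      rw [E_succ, if_pos hγ]
  · -- limit case
    classical
    obtain ⟨m, hm⟩ := cseq_cof hl hc hβ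
    -- pieces
    have hA : ∀ k : ℕ, {γ | γ < cseq δ k ∧ E (cseq δ k) γ ≤ k}.Finite := fun k =>
      E_fto _ (le_trans (Ordinal.card_le_card (cseq_lt hl hc k).le) hc) k
    have hC : ∀ k : ℕ, {γ | γ < β ∧ γ < cseq δ k ∧ E β γ ≠ E (cseq δ k) γ}.Finite := by
      intro k
      rcases lt_trichotomy β (cseq δ k) with h | h | h
      · exact Set.Finite.subset (IH _ (cseq_lt hl hc k)
          (le_trans (Ordinal.card_le_card (cseq_lt hl hc k).le) hc) β h)
          (fun γ hγ => ⟨hγ.1, hγ.2.2⟩)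
      · convert Set.finite_empty
        ext γ
        simp only [Set.mem_setOf_eq, Set.mem_empty_iff_false, iff_false, not_and, ne_eq, not_not]
        intro h1 h2; rw [h]
      · refine Set.Finite.subset (IH β hβ (le_trans (Ordinal.card_le_card hβ.le) hc) _ h) ?_
        rintro γ ⟨h1, h2, h3⟩
        exact ⟨h2, fun heq => h3 heq.symm⟩
    refine Set.Finite.subset (Set.Finite.biUnion (Set.finite_Iic m)
      (fun k _ => Set.Finite.union (hA k) (hC k))) ?_
    rintro γ ⟨hγβ, hne⟩
    have hγδ : γ < δ := hγβ.trans hβ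
    set k := Nat.find (cseq_cof hl hc hγδ) with hk
    have hklt : γ < cseq δ k := Nat.find_spec (cseq_cof hl hc hγδ)
    have hkm : k ≤ m := Nat.find_min' _ (hγβ.trans hm)
    rw [E_limit hl hc hγδ] at hne
    refine Set.mem_biUnion (hkm : k ≤ m) ?_
    rcases le_or_gt k (E (cseq δ k) γ) with hcase | hcase
    · right
      refine ⟨hγβ, hklt, fun heq => hne ?_⟩
      rw [← hk, max_eq_right hcase, heq]
    · exact Or.inl ⟨hklt, hcase.le⟩

/-- Let `H` be a nontrivial abelian group, `I` a countably infinite set, and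
`J` a set of cardinality `ℵ₁`.  Then there exists a coherent family
`⟨φ_f : X(f) → H | f : I → [J]^{<ω}⟩` (represented by total functions `I × J → H`, with all
conditions imposed only on `X(f) = {(i,j) | j ∈ f i}`) which is not trivial. -/
theorem stmt_5 (H : Type*) [AddCommGroup H] [Nontrivial H]
    (I : Type*) [Countable I] [Infinite I]
    (J : Type*) (hJ : Cardinal.mk J = Cardinal.aleph 1) :
    ∃ φ : (I → Finset J) → I × J → H,
      (∀ f g : I → Finset J, (∀ i, f i ⊆ g i) →
        {x : I × J | x.2 ∈ f x.1 ∧ φ f x ≠ φ g x}.Finite) ∧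
      ¬ ∃ ψ : I × J → H, ∀ f : I → Finset J,
          {x : I × J | x.2 ∈ f x.1 ∧ φ f x ≠ ψ x}.Finite := by
  classical
  obtain ⟨h0, h0ne⟩ := exists_ne (0 : H)
  obtain ⟨eI⟩ : Nonempty (I ≃ ℕ) := ⟨(nonempty_equiv_of_countable).some⟩
  obtain ⟨oe⟩ : Nonempty (J ↪ (Set.Iio (Cardinal.aleph 1 : Cardinal.{0}).ord)) := by
    rw [← Cardinal.lift_mk_le', hJ, Ordinal.mk_Iio_ordinal, Cardinal.card_ord]
    simp [Cardinal.lift_aleph]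
  set Om1 : Ordinal := (Cardinal.aleph 1 : Cardinal.{0}).ord with hOm1
  set o : J → Ordinal := fun j => (oe j).1 with ho
  have oinj : Function.Injective o := fun a b hab => oe.injective (Subtype.ext hab)
  have olt : ∀ j, o j < Om1 := fun j => (oe j).2
  have hOm1lim : Order.IsSuccLimit Om1 := Cardinal.isSuccLimit_ord (Cardinal.aleph0_le_aleph 1)
  have hcard : ∀ {δ : Ordinal}, δ < Om1 → δ.card ≤ ℵ₀ := by
    intro δ h
    have h2 := Cardinal.lt_ord.mp h
    rw [← Cardinal.succ_aleph0] at h2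
    exact Order.lt_succ_iff.mp h2
  have hsuplt : ∀ s : ℕ → Ordinal, (∀ n, s n < Om1) → (⨆ n, s n) < Om1 := by
    intro s hs
    refine Ordinal.iSup_lt_ord_lift ?_ hs
    rw [Cardinal.isRegular_aleph_one.cof_eq]
    simp [Cardinal.aleph0_lt_aleph_one]
  have hsucclt : ∀ {a : Ordinal}, a < Om1 → a + 1 < Om1 := by
    intro a ha
    rw [Ordinal.add_one_eq_succ]; exact hOm1lim.succ_lt ha
  set δf : (I → Finset J) → Ordinal :=
    fun f => ⨆ n : ℕ, ((f (eI.symm n)).sup fun j => (o j + 1 : Ordinal)) with hδf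
  have δf_lt : ∀ f, δf f < Om1 := by
    intro f
    refine hsuplt _ fun n => ?_
    refine (Finset.sup_lt_iff hOm1lim.pos).mpr fun j hj => hsucclt (olt j)
  have mem_lt : ∀ (f : I → Finset J) (i : I) (j : J), j ∈ f i → o j < δf f := by
    intro f i j hj
    have h1 : o j + 1 ≤ (f (eI.symm (eI i))).sup fun j => (o j + 1 : Ordinal) := by
      rw [Equiv.symm_apply_apply]; exact Finset.le_sup (f := fun j => (o j + 1 : Ordinal)) hj
    have h2 := le_trans h1
      (Ordinal.le_iSup (fun n => ((f (eI.symm n)).sup fun j => (o j + 1 : Ordinal))) (eI i))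
    exact lt_of_lt_of_le (lt_add_one_iff'.mpr le_rfl) h2
  have δf_mono : ∀ f g : I → Finset J, (∀ i, f i ⊆ g i) → δf f ≤ δf g := by
    intro f g hfg
    exact Ordinal.iSup_le fun n => le_trans (Finset.sup_mono (hfg _)) (Ordinal.le_iSup _ n)
  refine ⟨fun f x => if E (δf f) (o x.2) ≤ eI x.1 then h0 else 0, ?_, ?_⟩
  · -- coherence
    intro f g hfg
    rcases eq_or_lt_of_le (δf_mono f g hfg) with heq | hlt
    · convert Set.finite_empty
      ext x
      simp only [Set.mem_setOf_eq, Set.mem_empty_iff_false, iff_false, not_and, ne_eq, not_not]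
      intro hx
      rw [heq]
    · have hF := E_coh (δf g) (hcard (δf_lt g)) (δf f) hlt
      have hT : (⋃ γ ∈ {γ | γ < δf f ∧ E (δf f) γ ≠ E (δf g) γ},
          (fun n => (n, γ)) '' (Set.Iio (max (E (δf f) γ) (E (δf g) γ)))).Finite :=
        Set.Finite.biUnion hF fun γ _ => ((Set.finite_Iio _).image _)
      have hinj : Function.Injective (fun x : I × J => (eI x.1, o x.2)) := by
        rintro ⟨a1, a2⟩ ⟨b1, b2⟩ hab
        simp only [Prod.mk.injEq] at hab
        exact Prod.ext (eI.injective hab.1) (oinj hab.2)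
      refine Set.Finite.subset (Set.Finite.preimage hinj.injOn hT) ?_
      rintro ⟨i, j⟩ ⟨hmem, hne⟩
      simp only [Set.mem_setOf_eq] at hne
      by_cases ha : E (δf f) (o j) ≤ eI i <;> by_cases hb : E (δf g) (o j) ≤ eI i
      · exact absurd (by rw [if_pos ha, if_pos hb]) hne
      · refine Set.mem_preimage.mpr (Set.mem_biUnion
          (⟨mem_lt f i j hmem, fun heq2 => hb (heq2 ▸ ha)⟩ :
            o j ∈ {γ | γ < δf f ∧ E (δf f) γ ≠ E (δf g) γ}) ?_)
        exact ⟨eI i, lt_max_of_lt_right (lt_of_not_ge hb), rfl⟩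
      · refine Set.mem_preimage.mpr (Set.mem_biUnion
          (⟨mem_lt f i j hmem, fun heq2 => ha (heq2 ▸ hb)⟩ :
            o j ∈ {γ | γ < δf f ∧ E (δf f) γ ≠ E (δf g) γ}) ?_)
        exact ⟨eI i, lt_max_of_lt_left (lt_of_not_ge ha), rfl⟩
      · exact absurd (by rw [if_neg ha, if_neg hb]) hne
  · -- nontriviality
    rintro ⟨ψ, hψ⟩
    have step1 : ∀ j : J, ∃ M : ℕ, ∀ i : I, M ≤ eI i → ψ (i, j) = h0 := by
      intro j
      have hfin := hψ (fun _ => {j})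
      obtain ⟨B, hB⟩ := (hfin.image fun x => eI x.1).bddAbove
      refine ⟨max (E (δf (fun _ => {j})) (o j)) (B + 1), fun i hi => ?_⟩
      have hnot : (i, j) ∉ {x : I × J | x.2 ∈ ({j} : Finset J) ∧
          (if E (δf (fun _ => {j})) (o x.2) ≤ eI x.1 then h0 else 0) ≠ ψ x} := by
        intro hmem
        have := hB (Set.mem_image_of_mem (fun x => eI x.1) hmem)
        simp only at this
        omega
      simp only [Set.mem_setOf_eq, not_and, not_not] at hnot
      have := hnot (Finset.mem_singleton_self j)
      rw [if_pos (le_trans (le_max_left _ _) hi)] at this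
      exact this.symm
    choose N hN using step1
    obtain ⟨N₀, hA⟩ : ∃ n, {j : J | N j = n}.Infinite := by
      by_contra hcon
      push_neg at hcon
      have hcount : (Set.univ : Set J).Countable := by
        have huniv : (Set.univ : Set J) = ⋃ n : ℕ, {j | N j = n} := by
          ext j; simp
        rw [huniv]
        exact Set.countable_iUnion fun n => (hcon n).countable
      have : Cardinal.mk J ≤ ℵ₀ := by
        rw [Cardinal.mk_le_aleph0_iff]
        exact Set.countable_univ_iff.mp hcount
      rw [hJ] at this
      exact absurd (lt_of_lt_of_le Cardinal.aleph0_lt_aleph_one this) (lt_irrefl _)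
    set emb : ℕ ↪ {j : J | N j = N₀} := Set.Infinite.natEmbedding _ hA with hemb
    set g0 : ℕ → J := fun k => (emb k).1 with hg0
    have hg0inj : Function.Injective g0 :=
      fun a b hab => emb.injective (Subtype.ext hab)
    have hg0A : ∀ k, N (g0 k) = N₀ := fun k => (emb k).2
    set δ : Ordinal := ⨆ k : ℕ, (o (g0 k) + 1 : Ordinal) with hδdef
    have hδlt : δ < Om1 := hsuplt _ fun k => hsucclt (olt _)
    have hg0lt : ∀ k, o (g0 k) < δ := fun k =>
      lt_of_lt_of_le (lt_add_one_iff'.mpr le_rfl) (Ordinal.le_iSup (fun k => (o (g0 k) + 1 : Ordinal)) k)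
    set A' : Set J := Set.range g0 with hA'
    have hA'inf : A'.Infinite := Set.infinite_range_of_injective hg0inj
    have hA'δ : ∀ j ∈ A', o j < δ := by rintro j ⟨k, rfl⟩; exact hg0lt k
    have hA'N : ∀ j ∈ A', N j = N₀ := by rintro j ⟨k, rfl⟩; exact hg0A k
    have hUfin : ∀ i : I, {j | j ∈ A' ∧ E δ (o j) = eI i + 1 ∧ N₀ ≤ eI i}.Finite := by
      intro i
      refine Set.Finite.subset (Set.Finite.preimage oinj.injOn
        (E_fto δ (hcard hδlt) (eI i + 1))) ?_
      rintro j ⟨hj1, hj2, _⟩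
      exact ⟨hA'δ j hj1, le_of_eq hj2⟩
    set fstar : I → Finset J := fun i => (hUfin i).toFinset with hfstar
    have hmemf : ∀ (i : I) (j : J), j ∈ fstar i ↔
        (j ∈ A' ∧ E δ (o j) = eI i + 1 ∧ N₀ ≤ eI i) := fun i j => Set.Finite.mem_toFinset _
    have hδstar : δf fstar ≤ δ := by
      refine Ordinal.iSup_le fun n => Finset.sup_le fun j hj => ?_
      have hlt := hA'δ j ((hmemf _ j).mp hj).1
      rw [Ordinal.add_one_eq_succ]; exact Order.succ_le_of_lt hlt
    have hF : {γ | γ < δf fstar ∧ E (δf fstar) γ ≠ E δ γ}.Finite := by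
      rcases eq_or_lt_of_le hδstar with heq | hlt
      · rw [heq]
        convert Set.finite_empty
        ext γ
        simp
      · exact E_coh δ (hcard hδlt) _ hlt
    have hfin := hψ fstar
    obtain ⟨B, hB⟩ := (hfin.image fun x => eI x.1).bddAbove
    have hVinf : (A' \ (o ⁻¹' {γ | γ < δf fstar ∧ E (δf fstar) γ ≠ E δ γ})).Infinite :=
      Set.Infinite.diff hA'inf (Set.Finite.preimage oinj.injOn hF)
    have hbig : ∃ j ∈ A' \ (o ⁻¹' {γ | γ < δf fstar ∧ E (δf fstar) γ ≠ E δ γ}),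
        max B N₀ + 2 ≤ E δ (o j) := by
      by_contra hcon
      push_neg at hcon
      refine hVinf (Set.Finite.subset (Set.Finite.preimage oinj.injOn
        (E_fto δ (hcard hδlt) (max B N₀ + 1))) ?_)
      rintro j ⟨hj1, hj2⟩
      have := hcon j ⟨hj1, hj2⟩
      exact ⟨hA'δ j hj1, by omega⟩
    obtain ⟨js, hjsV, hjsE⟩ := hbig
    set ns : ℕ := E δ (o js) - 1 with hns
    have hE1 : E δ (o js) = ns + 1 := by omega
    set is : I := eI.symm ns with his
    have heis : eI is = ns := eI.apply_symm_apply ns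
    have hmemstar : js ∈ fstar is := by
      rw [hmemf]
      exact ⟨hjsV.1, by rw [heis, hE1], by rw [heis]; omega⟩
    have hφ0 : ¬ (E (δf fstar) (o js) ≤ eI is) := by
      have hlt2 : o js < δf fstar := mem_lt fstar is js hmemstar
      have hEeq : E (δf fstar) (o js) = E δ (o js) := by
        by_contra hne2
        exact hjsV.2 ⟨hlt2, hne2⟩
      rw [hEeq, hE1, heis]
      omega
    have hψval : ψ (is, js) = h0 := by
      have hNjs : N js = N₀ := hA'N js hjsV.1
      refine hN js is ?_
      rw [hNjs, heis]; omega
    have hxS : (is, js) ∈ {x : I × J | x.2 ∈ fstar x.1 ∧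
        (if E (δf fstar) (o x.2) ≤ eI x.1 then h0 else 0) ≠ ψ x} := by
      refine ⟨hmemstar, ?_⟩
      rw [if_neg hφ0, hψval]
      exact fun h => h0ne h.symm
    have hle := hB (Set.mem_image_of_mem (fun x => eI x.1) hxS)
    simp only at hle
    rw [heis] at hle
    omega
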